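/- Let L be a complete lattice and let X ⊆ L. Suppose every nonempty chain in L is finite (e.g., L is the lattice built from an infinite antichain X by adding a bottom m and top M). Then every subset of L is chain-subcomplete in L, yet (for the antichain example with X infinite and X viewed as a subset of L) X is not closed in the interval topology of L. Hence the converse of the statement 'interval-topology-closed implies chain-subcomplete' fails. -/

import Mathlib

/-- The interval topology of a preorder: the smallest topology in which all
rays `{x | a ≤ x}` and `{x | x ≤ a}` are closed. -/
def intervalTopology (L : Type*) [Preorder L] : TopologicalSpace L :=
  TopologicalSpace.generateFrom {s | ∃ a : L, s = (Set.Ici a)ᶜ ∨ s = (Set.Iic a)ᶜ}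

/-- An infinite antichain (indexed by `ℕ`) with a bottom and a top adjoined. -/
inductive L3 : Type
  | bot | mid (n : ℕ) | top
  deriving DecidableEq

namespace L3

instance : LE L3 := ⟨fun a b => a = bot ∨ b = top ∨ a = b⟩

lemma le_def (a b : L3) : a ≤ b ↔ (a = bot ∨ b = top ∨ a = b) := Iff.rfl

instance : PartialOrder L3 where
  le_refl a := Or.inr (Or.inr rfl)
  le_trans a b c hab hbc := by
    rcases hab with h | h | h
    · exact Or.inl h
    · rcases hbc with h' | h' | h' <;> simp_all [le_def]
    · exact h ▸ hbc
  le_antisymm a b hab hba := by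
    rcases hab with h | h | h
    · rcases hba with h' | h' | h' <;> simp_all
    · rcases hba with h' | h' | h' <;> simp_all
    · exact h

lemma bot_le (a : L3) : bot ≤ a := Or.inl rfl
lemma le_top (a : L3) : a ≤ top := Or.inr (Or.inl rfl)

lemma exists_lub (S : Set L3) : ∃ x, IsLUB S x := by
  by_cases htop : top ∈ S
  · exact ⟨top, fun x _ => le_top x, fun b hb => hb htop⟩
  by_cases h2 : ∃ n m, n ≠ m ∧ mid n ∈ S ∧ mid m ∈ S
  · obtain ⟨n, m, hnm, hn, hm⟩ := h2
    refine ⟨top, fun x _ => le_top x, fun b hb => ?_⟩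
    rcases hb hn with h | h | h
    · exact absurd h (by simp)
    · exact h ▸ le_refl _
    · rcases hb hm with h' | h' | h'
      · exact absurd h' (by simp)
      · exact h' ▸ le_refl _
      · exact absurd (h ▸ h') (by simp; exact fun hh => hnm hh.symm)
  by_cases h1 : ∃ n, mid n ∈ S
  · obtain ⟨n, hn⟩ := h1
    refine ⟨mid n, fun x hx => ?_, fun b hb => hb hn⟩
    rcases x with _ | m | _
    · exact bot_le _
    · rcases eq_or_ne m n with rfl | hne
      · exact le_refl _
      · exact absurd ⟨m, n, hne, hx, hn⟩ h2
    · exact absurd hx htop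
  · refine ⟨bot, fun x hx => ?_, fun b _ => bot_le b⟩
    rcases x with _ | m | _
    · exact le_refl _
    · exact absurd ⟨m, hx⟩ h1
    · exact absurd hx htop

noncomputable instance : SupSet L3 := ⟨fun S => (exists_lub S).choose⟩

noncomputable instance : CompleteLattice L3 :=
  completeLatticeOfSup L3 (fun S => (exists_lub S).choose_spec)

lemma chains_finite (D : Set L3) (hD : IsChain (· ≤ ·) D) : D.Finite := by
  by_cases h : ∃ n, mid n ∈ D
  · obtain ⟨n, hn⟩ := h
    apply Set.Finite.subset ((((Set.finite_singleton top).insert (mid n)).insert bot))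
    intro x hx
    rcases x with _ | m | _
    · simp
    · rcases eq_or_ne m n with rfl | hne
      · simp
      · rcases hD hx hn (by simp [hne]) with h' | h'
        · rcases h' with h | h | h <;> simp_all
        · rcases h' with h | h | h <;> simp_all
    · simp
  · apply Set.Finite.subset (((Set.finite_singleton top).insert bot))
    intro x hx
    rcases x with _ | m | _
    · simp
    · exact absurd ⟨m, hx⟩ h
    · simp

end L3

/-- In a complete lattice all of whose nonempty chains are finite, every
subset is chain-subcomplete; yet there is such a lattice (an infinite
antichain with a bottom and a top adjoined) containing a chain-subcomplete
subset — the infinite antichain itself — that is not closed in the interval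
topology. Hence the converse of "interval-topology-closed implies
chain-subcomplete" fails. -/
theorem chainSubcomplete_not_closed :
    (∀ (L : Type) (_ : CompleteLattice L),
      (∀ D : Set L, IsChain (· ≤ ·) D → D.Finite) →
      ∀ A : Set L, ∀ D : Set L, D ⊆ A → D.Nonempty → IsChain (· ≤ ·) D →
        sSup D ∈ A ∧ sInf D ∈ A) ∧
    (∃ (L : Type) (_ : CompleteLattice L) (X : Set L),
      X.Infinite ∧
      (∀ x ∈ X, ∀ y ∈ X, x ≠ y → ¬ x ≤ y) ∧
      (∀ D : Set L, IsChain (· ≤ ·) D → D.Finite) ∧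
      ¬ @IsClosed L (intervalTopology L) X) := by
  constructor
  · intro L _ hfin A D hDA hne hchain
    have hDfin := hfin D hchain
    obtain ⟨a, ha, hamax⟩ : ∃ a ∈ D, ∀ x ∈ D, a ≤ x → a = x := by
      obtain ⟨a, ha, h⟩ := Set.Finite.exists_maximal hDfin hne
      exact ⟨a, ha, fun x hx hax => le_antisymm hax (h hx hax)⟩
    obtain ⟨b, hb, hbmin⟩ : ∃ b ∈ D, ∀ x ∈ D, x ≤ b → b = x := by
      obtain ⟨b, hb, h⟩ := Set.Finite.exists_minimal hDfin hne
      exact ⟨b, hb, fun x hx hxb => le_antisymm (h hx hxb) hxb⟩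
    have hgreat : IsGreatest D a := by
      refine ⟨ha, fun x hx => ?_⟩
      rcases eq_or_ne x a with rfl | hne'
      · exact le_refl _
      · rcases hchain hx ha hne' with h | h
        · exact h
        · exact le_of_eq (hamax x hx h).symm
    have hleast : IsLeast D b := by
      refine ⟨hb, fun x hx => ?_⟩
      rcases eq_or_ne b x with rfl | hne'
      · exact le_refl _
      · rcases hchain hb hx hne' with h | h
        · exact h
        · exact le_of_eq (hbmin x hx h)
    exact ⟨hDA hgreat.csSup_mem, hDA hleast.csInf_mem⟩
  · refine ⟨L3, inferInstance, Set.range L3.mid, ?_, ?_, L3.chains_finite, ?_⟩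
    · exact Set.infinite_range_of_injective (fun a b h => by injection h)
    · rintro x ⟨n, rfl⟩ y ⟨m, rfl⟩ hne hle
      rcases hle with h | h | h <;> simp_all
    · intro hclosed
      have hopen : (intervalTopology L3).IsOpen (Set.range L3.mid)ᶜ := hclosed.isOpen_compl
      -- key invariant: every generated-open set containing bot misses only finitely many mids
      have key : ∀ s : Set L3, TopologicalSpace.GenerateOpen
          {s | ∃ a : L3, s = (Set.Ici a)ᶜ ∨ s = (Set.Iic a)ᶜ} s →
          L3.bot ∈ s → {n : ℕ | L3.mid n ∉ s}.Finite := by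
        intro s hs
        induction hs with
        | basic s hs =>
          obtain ⟨a, rfl | rfl⟩ := hs
          · intro hbot
            rcases a with _ | m | _
            · exact absurd (L3.bot_le _) hbot
            · apply Set.Finite.subset (Set.finite_singleton m)
              intro n hn
              simp only [Set.mem_setOf_eq, Set.mem_compl_iff, Set.mem_Ici, not_not] at hn
              rcases hn with h | h | h <;> simp_all
            · apply Set.Finite.subset Set.finite_empty
              intro n hn
              simp only [Set.mem_setOf_eq, Set.mem_compl_iff, Set.mem_Ici, not_not] at hn
              rcases hn with h | h | h <;> simp_all
          · intro hbot
            exact absurd (by simpa using (L3.bot_le a)) hbot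
        | univ => intro _; simp
        | inter s t _ _ ihs iht =>
          intro hbot
          apply Set.Finite.subset ((ihs hbot.1).union (iht hbot.2))
          intro n hn
          simp only [Set.mem_setOf_eq, Set.mem_inter_iff, not_and_or] at hn
          tauto
        | sUnion S _ ih =>
          intro hbot
          obtain ⟨t, ht, hbt⟩ := hbot
          apply Set.Finite.subset (ih t ht hbt)
          intro n hn
          simp only [Set.mem_setOf_eq] at hn ⊢
          exact fun h => hn ⟨t, ht, h⟩
      have hbot : L3.bot ∈ (Set.range L3.mid)ᶜ := by
        rintro ⟨n, h⟩; exact L3.noConfusion h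
      have := key _ hopen hbot
      simp only [Set.mem_compl_iff, not_not] at this
      have : (Set.univ : Set ℕ).Finite := this.subset (fun n _ => ⟨n, rfl⟩)
      exact Set.infinite_univ this
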